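/- Let θ, x, z solve x' = cos θ, z' = sin θ, z > 0, with θ'(s) = ((m−1) cos θ(s) + n)/z(s), θ(0) = 0, m ≥ 1, n = 0, m > 1. Then θ(s) ∈ (−π/2, π/2) for all s, x'(s) = cos θ(s) > 0, and z''(s) = θ'(s) cos θ(s) > 0 for s with θ'(s) > 0; hence the generating curve is a strictly convex graph over the x-axis with a minimum at s = 0. -/

import Mathlib

open Real Set

/-- Case `n = 0`, `m > 1`: the generating curve of a parabolic surface with
`κ₁ = m κ₂`, `θ(0) = 0`, satisfies `θ ∈ (-π/2, π/2)`, `x' = cos θ > 0`, and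
`z'' = θ' cos θ > 0` where `θ' > 0`; it is a strictly convex graph over the
`x`-axis with a minimum at `s = 0`. -/
theorem stmt9 (m : ℝ) (θ x z θd : ℝ → ℝ) (I : Set ℝ)
    (hI : I.OrdConnected) (hI0 : (0 : ℝ) ∈ I)
    (hx : ∀ s ∈ I, HasDerivAt x (Real.cos (θ s)) s)
    (hz : ∀ s ∈ I, HasDerivAt z (Real.sin (θ s)) s)
    (hθ : ∀ s ∈ I, HasDerivAt θ (θd s) s)
    (hzpos : ∀ s ∈ I, 0 < z s)
    (hode : ∀ s ∈ I, θd s = ((m - 1) * Real.cos (θ s) + 0) / z s)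
    (hθ0 : θ 0 = 0) (hm : 1 < m) :
    (∀ s ∈ I, -(π / 2) < θ s ∧ θ s < π / 2 ∧ 0 < Real.cos (θ s)) ∧
    (∀ s ∈ I, 0 < θd s → 0 < θd s * Real.cos (θ s)) ∧
    (∀ s ∈ I, z 0 ≤ z s) := by
  set p : ℝ := m - 1 with hpdef
  have hp : (0:ℝ) < p := by simp [hpdef]; linarith
  -- the quantity z^p * cos θ has zero derivative on I
  have hg : ∀ s ∈ I, HasDerivAt (fun t => z t ^ p * Real.cos (θ t)) 0 s := by
    intro s hs
    have hzs := hzpos s hs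
    have hz0 : z s ≠ 0 := hzs.ne'
    have h1 : HasDerivAt (fun t => z t ^ p) (p * z s ^ (p - 1) * Real.sin (θ s)) s := by
      have := (Real.hasDerivAt_rpow_const (x := z s) (p := p) (Or.inl hz0)).comp s (hz s hs)
      exact this
    have h2 : HasDerivAt (fun t => Real.cos (θ t)) (-Real.sin (θ s) * θd s) s :=
      (Real.hasDerivAt_cos (θ s)).comp s (hθ s hs)
    have hmul := h1.mul h2
    refine hmul.congr_deriv ?_; symm
    rw [hode s hs]
    have hzp : z s ^ (p - 1) = z s ^ p / z s := by
      rw [Real.rpow_sub hzs, Real.rpow_one]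
    rw [hzp]
    field_simp
    ring
  -- conservation law
  have key : ∀ s ∈ I, z s ^ p * Real.cos (θ s) = z 0 ^ p := by
    intro s hs
    rcases le_total 0 s with h | h
    · have hsub : Icc (0:ℝ) s ⊆ I := hI.out hI0 hs
      have := constant_of_has_deriv_right_zero (f := fun t => z t ^ p * Real.cos (θ t))
        (a := 0) (b := s)
        (fun t ht => (hg t (hsub ht)).continuousAt.continuousWithinAt)
        (fun t ht => (hg t (hsub (Ico_subset_Icc_self ht))).hasDerivWithinAt)
        s (right_mem_Icc.mpr h)
      have this' : z s ^ p * Real.cos (θ s) = z 0 ^ p * Real.cos (θ 0) := this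
      rw [this', hθ0, Real.cos_zero, mul_one]
    · have hsub : Icc s (0:ℝ) ⊆ I := hI.out hs hI0
      have := constant_of_has_deriv_right_zero (f := fun t => z t ^ p * Real.cos (θ t))
        (a := s) (b := 0)
        (fun t ht => (hg t (hsub ht)).continuousAt.continuousWithinAt)
        (fun t ht => (hg t (hsub (Ico_subset_Icc_self ht))).hasDerivWithinAt)
        0 (right_mem_Icc.mpr h)
      have this' : z 0 ^ p * Real.cos (θ 0) = z s ^ p * Real.cos (θ s) := this
      rw [hθ0, Real.cos_zero, mul_one] at this'
      exact this'.symm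
  have hcospos : ∀ s ∈ I, 0 < Real.cos (θ s) := by
    intro s hs
    have h1 : 0 < z s ^ p := Real.rpow_pos_of_pos (hzpos s hs) p
    have h2 : 0 < z 0 ^ p := Real.rpow_pos_of_pos (hzpos 0 hI0) p
    nlinarith [key s hs]
  have hθcontOn : ∀ s ∈ I, ContinuousOn θ (uIcc 0 s) := by
    intro s hs t ht
    exact ((hθ t (hI.uIcc_subset hI0 hs ht)).continuousAt).continuousWithinAt
  have hbound : ∀ s ∈ I, -(π / 2) < θ s ∧ θ s < π / 2 := by
    intro s hs
    constructor
    · by_contra h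
      push_neg at h
      have hmem : -(π / 2) ∈ uIcc (θ 0) (θ s) := by
        rw [hθ0]
        exact mem_uIcc.mpr (Or.inr ⟨h, by linarith [Real.pi_pos]⟩)
      obtain ⟨t, ht, hteq⟩ := intermediate_value_uIcc (hθcontOn s hs) hmem
      have hcz : Real.cos (θ t) = 0 := by
        rw [hteq]; simp [Real.cos_pi_div_two]
      exact absurd hcz (ne_of_gt (hcospos t (hI.uIcc_subset hI0 hs ht)))
    · by_contra h
      push_neg at h
      have hmem : π / 2 ∈ uIcc (θ 0) (θ s) := by
        rw [hθ0]
        exact mem_uIcc.mpr (Or.inl ⟨by linarith [Real.pi_pos], h⟩)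
      obtain ⟨t, ht, hteq⟩ := intermediate_value_uIcc (hθcontOn s hs) hmem
      have hcz : Real.cos (θ t) = 0 := by
        rw [hteq]; exact Real.cos_pi_div_two
      exact absurd hcz (ne_of_gt (hcospos t (hI.uIcc_subset hI0 hs ht)))
  refine ⟨fun s hs => ⟨(hbound s hs).1, (hbound s hs).2, hcospos s hs⟩,
    fun s hs hpos => mul_pos hpos (hcospos s hs), fun s hs => ?_⟩
  by_contra h
  push_neg at h
  have hlt : z s ^ p < z 0 ^ p := Real.rpow_lt_rpow (hzpos s hs).le h hp
  have hle : Real.cos (θ s) ≤ 1 := Real.cos_le_one _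
  have h1 : 0 < z s ^ p := Real.rpow_pos_of_pos (hzpos s hs) p
  nlinarith [key s hs]
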